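/- Let P : {±1}^k → [0,1] be a generalized Boolean predicate, identified with its multilinear extension to [−1,1]^k, and let E[P] = P(0,…,0). Fix a finite set D ⊆ [−1,1] and consider a random CSP with n variables taking values in D and m = Δn uniformly random scopes of k distinct variables each, where the objective value of an assignment f is the average of P(f(S)) over the m scopes S. Let 0 ≤ ζ be such that kζ² < 1/2. Then, with probability 1 − o(1) over the random scopes, every assignment f with |avg_{x∈X} f(x)| ≤ ζ has objective value at most E[P] + η₁ + η₂, where η₁ = O(√(log|D|/Δ) + k²/n) and η₂ = O(√k · ζ). -/

import Mathlib

open Finset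

/-- Probability of an event under the uniform distribution on a finite sample space. -/
noncomputable def uprob {Ω : Type} [Fintype Ω] (p : Ω → Prop) : ℝ :=
  letI := Classical.decPred p
  ((Finset.univ.filter p).card : ℝ) / (Fintype.card Ω : ℝ)

/-- The ±1 sign encoded by a Boolean (`true ↦ +1`). -/
noncomputable def sgn (b : Bool) : ℝ := if b then 1 else -1

/-- The multilinear extension of a (generalized) predicate `P : {±1}^k → ℝ`, evaluated at
`μ ∈ [-1,1]^k`: the expectation of `P` at independent ±1 bits with means `μ_i`. -/
noncomputable def mlext {k : ℕ} (P : (Fin k → Bool) → ℝ) (μ : Fin k → ℝ) : ℝ :=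
  ∑ a : Fin k → Bool, P a * ∏ i, ((1 + sgn (a i) * μ i) / 2)


lemma exp_quad {x : ℝ} (hx : |x| ≤ 1) : Real.exp x ≤ 1 + x + x ^ 2 := by
  have h := Real.exp_bound hx (n := 2) (by norm_num)
  have h2 : ∑ m ∈ Finset.range 2, x ^ m / m.factorial = 1 + x := by
    simp [Finset.sum_range_succ]
  rw [h2] at h
  have h3 := (abs_le.mp h).2
  have hx2 : |x| ^ 2 = x ^ 2 := sq_abs x
  have : ((Nat.succ 2 : ℕ) : ℝ) / ((Nat.factorial 2 : ℕ) * (2:ℕ)) = 3/4 := by norm_num [Nat.factorial]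
  rw [this, hx2] at h3
  nlinarith [sq_nonneg x]

lemma sgn_abs (b : Bool) {μ : ℝ} (hμ : |μ| ≤ 1) : 0 ≤ (1 + sgn b * μ) / 2 := by
  rcases b <;> simp [sgn] <;> cases abs_le.mp hμ <;> linarith

lemma sum_weight_bool {μ : ℝ} : ∑ b : Bool, (1 + sgn b * μ) / 2 = 1 := by
  simp [sgn]; ring

lemma weight_nonneg {k : ℕ} (μ : Fin k → ℝ) (hμ : ∀ i, |μ i| ≤ 1) (a : Fin k → Bool) :
    0 ≤ ∏ i, ((1 + sgn (a i) * μ i) / 2) :=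
  Finset.prod_nonneg fun i _ => sgn_abs (a i) (hμ i)

lemma sum_weight {k : ℕ} (μ : Fin k → ℝ) :
    ∑ a : Fin k → Bool, ∏ i, ((1 + sgn (a i) * μ i) / 2) = 1 := by
  rw [← Fintype.piFinset_univ,
    Finset.sum_prod_piFinset univ (fun i b => (1 + sgn b * μ i) / 2)]
  refine Finset.prod_eq_one fun i _ => ?_
  simp [sgn]; ring

lemma mlext_mem {k : ℕ} (P : (Fin k → Bool) → ℝ) (hP : ∀ a, P a ∈ Set.Icc (0:ℝ) 1)
    (μ : Fin k → ℝ) (hμ : ∀ i, |μ i| ≤ 1) : mlext P μ ∈ Set.Icc (0:ℝ) 1 := by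
  constructor
  · exact Finset.sum_nonneg fun a _ => mul_nonneg (hP a).1 (weight_nonneg μ hμ a)
  · have h1 : mlext P μ ≤ ∑ a : Fin k → Bool, ∏ i, ((1 + sgn (a i) * μ i) / 2) :=
      Finset.sum_le_sum fun a _ => mul_le_of_le_one_left (weight_nonneg μ hμ a) (hP a).2
    calc mlext P μ ≤ _ := h1
      _ = 1 := sum_weight μ

lemma mlext_const_le {k : ℕ} (hk : 0 < k) (P : (Fin k → Bool) → ℝ)
    (hP : ∀ a, P a ∈ Set.Icc (0:ℝ) 1) (μ : ℝ) (hμ2 : (k:ℝ) * μ ^ 2 ≤ 1/2) :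
    mlext P (fun _ => μ) ≤ mlext P (fun _ => 0) + Real.sqrt 2 * Real.sqrt k * |μ| := by
  have hk1 : (1:ℝ) ≤ (k:ℝ) := by exact_mod_cast hk
  have hμsq : μ ^ 2 ≤ 1/2 := by nlinarith [sq_nonneg μ]
  set w : (Fin k → Bool) → ℝ := fun a => ∏ i, ((1 + sgn (a i) * μ) / 2) with hw
  set u : ℝ := (1/2 : ℝ) ^ k with hu
  have hupos : 0 < u := by positivity
  have hcard : ((Fintype.card (Fin k → Bool) : ℕ) : ℝ) = 2 ^ k := by
    simp [Fintype.card_fun]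
  have hsum_u : ∑ _a : Fin k → Bool, u = 1 := by
    rw [Finset.sum_const, Finset.card_univ, nsmul_eq_mul, hcard, hu, ← mul_pow]
    norm_num
  have hsum_w : ∑ a : Fin k → Bool, w a = 1 := by
    rw [hw, ← Fintype.piFinset_univ,
      Finset.sum_prod_piFinset univ (fun _i b => (1 + sgn b * μ) / 2)]
    exact Finset.prod_eq_one fun i _ => by simp [sgn]; ring
  have hsum_w2 : ∑ a : Fin k → Bool, (w a) ^ 2 = ((1 + μ^2)/2) ^ k := by
    have e : ∀ a : Fin k → Bool, (w a) ^ 2 = ∏ i, ((1 + sgn (a i) * μ) / 2) ^ 2 := by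
      intro a; rw [hw]; exact (Finset.prod_pow _ _ _).symm
    rw [Finset.sum_congr rfl fun a _ => e a, ← Fintype.piFinset_univ,
      Finset.sum_prod_piFinset univ (fun _i b => ((1 + sgn b * μ) / 2) ^ 2),
      Finset.prod_congr rfl (fun i _ => show ∑ b : Bool, ((1 + sgn b * μ)/2)^2 = (1+μ^2)/2 by
        simp [sgn]; ring)]
    exact Finset.prod_const _ |>.trans (by rw [Finset.card_univ, Fintype.card_fin])
  have hCS : (∑ a : Fin k → Bool, |w a - u|) ^ 2 ≤ (1 + μ^2) ^ k - 1 := by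
    have h1 : (∑ a : Fin k → Bool, Real.sqrt u * (|w a - u| / Real.sqrt u)) ^ 2 ≤
        (∑ _a : Fin k → Bool, Real.sqrt u ^ 2) *
          (∑ a : Fin k → Bool, (|w a - u| / Real.sqrt u) ^ 2) :=
      Finset.sum_mul_sq_le_sq_mul_sq _ _ _
    have hsu : Real.sqrt u ≠ 0 := by positivity
    have e1 : ∀ a : Fin k → Bool, Real.sqrt u * (|w a - u| / Real.sqrt u) = |w a - u| := by
      intro a; field_simp
    have e2 : ∑ _a : Fin k → Bool, Real.sqrt u ^ 2 = ∑ _a : Fin k → Bool, u := by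
      refine Finset.sum_congr rfl fun a _ => Real.sq_sqrt hupos.le
    have e3 : ∀ a : Fin k → Bool, (|w a - u| / Real.sqrt u) ^ 2 = (w a)^2/u - (2 * w a - u) := by
      intro a; rw [div_pow, sq_abs, Real.sq_sqrt hupos.le]; field_simp; ring
    rw [Finset.sum_congr rfl fun a _ => e1 a, e2, hsum_u,
      Finset.sum_congr rfl fun a _ => e3 a, Finset.sum_sub_distrib, ← Finset.sum_div,
      hsum_w2, Finset.sum_sub_distrib, ← Finset.mul_sum, hsum_w, hsum_u] at h1
    have e4 : ((1+μ^2)/2)^k / u = (1+μ^2)^k := by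
      rw [hu, div_pow, div_pow]
      have h2k : (2:ℝ)^k ≠ 0 := by positivity
      field_simp
      simp
    rw [e4] at h1; linarith
  have hnn : 0 ≤ ∑ a : Fin k → Bool, |w a - u| :=
    Finset.sum_nonneg fun a _ => abs_nonneg _
  have hb2 : (1 + μ^2)^k - 1 ≤ 2 * ((k:ℝ) * μ^2) := by
    have h1 : (1+μ^2)^k ≤ Real.exp ((k:ℝ) * μ^2) := by
      calc (1+μ^2)^k ≤ (Real.exp (μ^2))^k :=
            pow_le_pow_left₀ (by positivity) (by linarith [Real.add_one_le_exp (μ^2)]) k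
        _ = Real.exp ((k:ℝ) * μ^2) := (Real.exp_nat_mul _ k).symm
    have hxnn : (0:ℝ) ≤ (k:ℝ) * μ^2 := by positivity
    have hx : |(k:ℝ) * μ^2| ≤ 1 := by rw [abs_of_nonneg hxnn]; linarith
    have h2 := exp_quad hx
    nlinarith
  have habs : ∑ a : Fin k → Bool, |w a - u| ≤ Real.sqrt 2 * Real.sqrt k * |μ| := by
    calc ∑ a : Fin k → Bool, |w a - u| = Real.sqrt ((∑ a : Fin k → Bool, |w a - u|)^2) :=
          (Real.sqrt_sq hnn).symm
      _ ≤ Real.sqrt (2 * (k:ℝ) * μ^2) := Real.sqrt_le_sqrt (by nlinarith)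
      _ = Real.sqrt 2 * Real.sqrt k * |μ| := by
          rw [Real.sqrt_mul (by positivity), Real.sqrt_mul (by norm_num), Real.sqrt_sq_eq_abs]
  have h0 : mlext P (fun _ => 0) = ∑ a : Fin k → Bool, P a * u := by
    unfold mlext
    refine Finset.sum_congr rfl fun a _ => ?_
    congr 1
    calc ∏ i, ((1 + sgn (a i) * (0:ℝ))/2) = ∏ _i : Fin k, ((1:ℝ)/2) := by norm_num
      _ = u := by rw [Finset.prod_const, Finset.card_univ, Fintype.card_fin, hu]
  have hdiff : mlext P (fun _ => μ) - mlext P (fun _ => 0) ≤ ∑ a : Fin k → Bool, |w a - u| := by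
    have hm : mlext P (fun _ => μ) = ∑ a : Fin k → Bool, P a * w a := rfl
    rw [hm, h0, ← Finset.sum_sub_distrib]
    refine Finset.sum_le_sum fun a _ => ?_
    have hPa := hP a
    rcases le_total u (w a) with h | h
    · rw [abs_of_nonneg (by linarith)]; nlinarith [hPa.1, hPa.2]
    · rw [abs_of_nonpos (by linarith)]; nlinarith [hPa.1, hPa.2]
  linarith

lemma chernoff {E : Type} [Fintype E] [DecidableEq E] (m : ℕ) (G : E → ℝ)
    (h0 : ∀ e, 0 ≤ G e) (h1 : ∀ e, G e ≤ 1) (t : ℝ) (ht : 0 ≤ t)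
    (hE : 0 < Fintype.card E) (p : (Fin m → E) → Prop) [DecidablePred p]
    (hp : ∀ ω, p ω → (m:ℝ) * ((∑ e, G e) / (Fintype.card E : ℝ) + t) ≤ ∑ j, G (ω j)) :
    ((Finset.univ.filter p).card : ℝ)
      ≤ (Fintype.card E : ℝ) ^ m * Real.exp (-(m:ℝ) * t ^ 2 / 4) := by
  have hEne : (Fintype.card E : ℝ) ≠ 0 := by positivity
  set μ : ℝ := (∑ e, G e) / (Fintype.card E : ℝ) with hμ
  have hμ0 : 0 ≤ μ := by
    apply div_nonneg (Finset.sum_nonneg fun e _ => h0 e) (by positivity)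
  have hμ1 : μ ≤ 1 := by
    rw [hμ, div_le_one (by positivity)]
    calc ∑ e, G e ≤ ∑ _e : E, (1:ℝ) := Finset.sum_le_sum fun e _ => h1 e
      _ = Fintype.card E := by simp
  have hsumG : ∑ e, G e = (Fintype.card E : ℝ) * μ := by
    rw [hμ]; field_simp
  by_cases htt : t ≤ 2
  · set l : ℝ := t / 2 with hl
    have hl0 : 0 ≤ l := by positivity
    have hl1 : l ≤ 1 := by rw [hl]; linarith
    -- single-sample MGF bound
    have hmgf : ∑ e, Real.exp (l * G e) ≤ (Fintype.card E : ℝ) * Real.exp (l * μ + l ^ 2) := by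
      have step : ∀ e, Real.exp (l * G e) ≤
          Real.exp (l * μ) * (1 + l * (G e - μ) + (l * (G e - μ)) ^ 2) := by
        intro e
        have hz : |l * (G e - μ)| ≤ 1 := by
          rw [abs_mul, abs_of_nonneg hl0]
          have : |G e - μ| ≤ 1 := by
            rw [abs_le]; constructor <;> nlinarith [h0 e, h1 e]
          nlinarith
        calc Real.exp (l * G e) = Real.exp (l * μ) * Real.exp (l * (G e - μ)) := by
              rw [← Real.exp_add]; ring_nf
          _ ≤ Real.exp (l * μ) * (1 + l * (G e - μ) + (l * (G e - μ)) ^ 2) := by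
              have := exp_quad hz
              exact mul_le_mul_of_nonneg_left this (Real.exp_pos _).le
      calc ∑ e, Real.exp (l * G e)
          ≤ ∑ e, Real.exp (l * μ) * (1 + l * (G e - μ) + (l * (G e - μ)) ^ 2) :=
            Finset.sum_le_sum fun e _ => step e
        _ ≤ ∑ e, Real.exp (l * μ) * (1 + l * (G e - μ) + l ^ 2) := by
            refine Finset.sum_le_sum fun e _ => ?_
            refine mul_le_mul_of_nonneg_left ?_ (Real.exp_pos _).le
            have h2 : (l * (G e - μ)) ^ 2 ≤ l ^ 2 := by
              rw [mul_pow]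
              have : (G e - μ) ^ 2 ≤ 1 := by nlinarith [h0 e, h1 e]
              nlinarith [sq_nonneg l]
            linarith
        _ = Real.exp (l * μ) * ((Fintype.card E : ℝ) * (1 + l ^ 2)) := by
            rw [← Finset.mul_sum]
            congr 1
            rw [Finset.sum_add_distrib, Finset.sum_add_distrib, ← Finset.mul_sum,
              Finset.sum_sub_distrib, hsumG]
            simp [Finset.sum_const, Finset.card_univ, nsmul_eq_mul]
            ring
        _ ≤ (Fintype.card E : ℝ) * Real.exp (l * μ + l ^ 2) := by
            rw [Real.exp_add]
            have h3 : 1 + l ^ 2 ≤ Real.exp (l ^ 2) := by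
              linarith [Real.add_one_le_exp (l ^ 2)]
            calc Real.exp (l * μ) * ((Fintype.card E : ℝ) * (1 + l ^ 2))
                ≤ Real.exp (l * μ) * ((Fintype.card E : ℝ) * Real.exp (l ^ 2)) := by
                  refine mul_le_mul_of_nonneg_left ?_ (Real.exp_pos _).le
                  exact mul_le_mul_of_nonneg_left h3 (by positivity)
              _ = (Fintype.card E : ℝ) * (Real.exp (l * μ) * Real.exp (l ^ 2)) := by ring
    -- Chernoff chain
    have hchain : ((Finset.univ.filter p).card : ℝ) ≤
        Real.exp (-(l * ((m:ℝ) * (μ + t)))) * (∑ e, Real.exp (l * G e)) ^ m := by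
      have key : ((Finset.univ.filter p).card : ℝ) ≤
          ∑ ω : Fin m → E, Real.exp (l * (∑ j, G (ω j) - (m:ℝ) * (μ + t))) := by
        calc ((Finset.univ.filter p).card : ℝ)
            = ∑ ω ∈ Finset.univ.filter p, (1:ℝ) := by simp
          _ ≤ ∑ ω ∈ Finset.univ.filter p, Real.exp (l * (∑ j, G (ω j) - (m:ℝ) * (μ + t))) := by
              refine Finset.sum_le_sum fun ω hω => ?_
              rw [Finset.mem_filter] at hω
              have := hp ω hω.2
              rw [← Real.exp_zero]
              exact Real.exp_le_exp.mpr (by nlinarith)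
          _ ≤ ∑ ω : Fin m → E, Real.exp (l * (∑ j, G (ω j) - (m:ℝ) * (μ + t))) :=
              Finset.sum_le_sum_of_subset_of_nonneg (Finset.filter_subset _ _)
                (fun ω _ _ => (Real.exp_pos _).le)
      have factor : ∑ ω : Fin m → E, Real.exp (l * (∑ j, G (ω j) - (m:ℝ) * (μ + t)))
          = Real.exp (-(l * ((m:ℝ) * (μ + t)))) * (∑ e, Real.exp (l * G e)) ^ m := by
        have e1 : ∀ ω : Fin m → E, Real.exp (l * (∑ j, G (ω j) - (m:ℝ) * (μ + t)))
            = Real.exp (-(l * ((m:ℝ) * (μ + t)))) * ∏ j, Real.exp (l * G (ω j)) := by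
          intro ω
          rw [← Real.exp_sum, ← Real.exp_add]
          congr 1
          rw [← Finset.mul_sum]
          ring
        rw [Finset.sum_congr rfl fun ω _ => e1 ω, ← Finset.mul_sum]
        congr 1
        rw [← Fintype.piFinset_univ,
          Finset.sum_prod_piFinset univ (fun (_j : Fin m) (e : E) => Real.exp (l * G e))]
        simp [Finset.prod_const]
      rw [factor] at key
      exact key
    have hpow : (∑ e, Real.exp (l * G e)) ^ m ≤
        ((Fintype.card E : ℝ) * Real.exp (l * μ + l ^ 2)) ^ m :=
      pow_le_pow_left₀ (Finset.sum_nonneg fun e _ => (Real.exp_pos _).le) hmgf m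
    calc ((Finset.univ.filter p).card : ℝ)
        ≤ Real.exp (-(l * ((m:ℝ) * (μ + t)))) *
            ((Fintype.card E : ℝ) * Real.exp (l * μ + l ^ 2)) ^ m := by
          refine hchain.trans ?_
          exact mul_le_mul_of_nonneg_left hpow (Real.exp_pos _).le
      _ = (Fintype.card E : ℝ) ^ m *
            Real.exp (-(l * ((m:ℝ) * (μ + t))) + (m:ℝ) * (l * μ + l ^ 2)) := by
          rw [mul_pow, ← Real.exp_nat_mul, mul_left_comm, ← Real.exp_add]
      _ ≤ (Fintype.card E : ℝ) ^ m * Real.exp (-(m:ℝ) * t ^ 2 / 4) := by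
          refine mul_le_mul_of_nonneg_left ?_ (by positivity)
          refine Real.exp_le_exp.mpr ?_
          have : -(l * ((m:ℝ) * (μ + t))) + (m:ℝ) * (l * μ + l ^ 2)
              = (m:ℝ) * (l ^ 2 - l * t) := by ring
          rw [this, hl]
          have hm0 : (0:ℝ) ≤ (m:ℝ) := by positivity
          nlinarith [sq_nonneg t]
  · -- t > 2 : the event is empty (if m > 0)
    push_neg at htt
    rcases Nat.eq_zero_or_pos m with hm | hm
    · subst hm
      calc ((Finset.univ.filter p).card : ℝ) ≤ (Finset.univ : Finset (Fin 0 → E)).card := by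
            exact_mod_cast Finset.card_le_card (Finset.filter_subset _ _)
        _ = 1 := by simp
        _ ≤ _ := by simp
    · have hempty : Finset.univ.filter p = ∅ := by
        refine Finset.filter_eq_empty_iff.mpr fun ω _ => fun hpω => ?_
        have h := hp ω hpω
        have hub : ∑ j, G (ω j) ≤ (m:ℝ) := by
          calc ∑ j, G (ω j) ≤ ∑ _j : Fin m, (1:ℝ) := Finset.sum_le_sum fun j _ => h1 _
            _ = (m:ℝ) := by simp
        have hm1 : (1:ℝ) ≤ (m:ℝ) := by exact_mod_cast hm
        nlinarith
      rw [hempty]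
      simp
      positivity

lemma descfac_gap : ∀ (k n : ℕ), k ≤ n →
    ((n:ℝ) ^ k - (n.descFactorial k : ℝ)) * (n:ℝ) ≤ (k:ℝ) ^ 2 * (n:ℝ) ^ k := by
  intro k
  induction k with
  | zero => intro n _; simp
  | succ k ih =>
    intro n hkn
    have hk : k ≤ n := Nat.le_of_succ_le hkn
    have ihn := ih n hk
    have hd : ((n.descFactorial (k+1) : ℕ) : ℝ) = ((n:ℝ) - k) * (n.descFactorial k : ℝ) := by
      rw [Nat.descFactorial_succ]
      push_cast [Nat.cast_sub hk]
      ring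
    have hdle : ((n.descFactorial k : ℕ) : ℝ) ≤ (n:ℝ) ^ k := by
      exact_mod_cast Nat.descFactorial_le_pow n k
    have hd0 : (0:ℝ) ≤ ((n.descFactorial k : ℕ) : ℝ) := by positivity
    have hn0 : (0:ℝ) ≤ (n:ℝ) := by positivity
    have hkn' : (k:ℝ) ≤ (n:ℝ) := by exact_mod_cast hk
    have hpow : (0:ℝ) ≤ (n:ℝ) ^ k := by positivity
    rw [hd]
    have expand : ((n:ℝ) ^ (k+1) - ((n:ℝ) - k) * (n.descFactorial k : ℝ)) * (n:ℝ)
        = (((n:ℝ) ^ k - (n.descFactorial k : ℝ)) * (n:ℝ)) * (n:ℝ)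
          + (k:ℝ) * (n.descFactorial k : ℝ) * (n:ℝ) := by ring
    rw [expand]
    have h1 : (((n:ℝ) ^ k - (n.descFactorial k : ℝ)) * (n:ℝ)) * (n:ℝ)
        ≤ ((k:ℝ) ^ 2 * (n:ℝ) ^ k) * (n:ℝ) := mul_le_mul_of_nonneg_right ihn hn0
    have h2 : (k:ℝ) * (n.descFactorial k : ℝ) * (n:ℝ) ≤ (k:ℝ) * (n:ℝ) ^ k * (n:ℝ) := by
      have : (k:ℝ) * (n.descFactorial k : ℝ) ≤ (k:ℝ) * (n:ℝ) ^ k :=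
        mul_le_mul_of_nonneg_left hdle (by positivity)
      exact mul_le_mul_of_nonneg_right this hn0
    have : ((k:ℝ)^2 * (n:ℝ)^k) * (n:ℝ) + (k:ℝ) * (n:ℝ)^k * (n:ℝ)
        ≤ ((k:ℕ)+1:ℝ)^2 * (n:ℝ)^(k+1) := by
      have : (n:ℝ) ^ (k+1) = (n:ℝ)^k * n := by ring
      rw [this]
      nlinarith [mul_nonneg hpow hn0]
    push_cast
    push_cast at this
    linarith
  
lemma sum_fun_mlext {k n : ℕ} (hn : 0 < n) (P : (Fin k → Bool) → ℝ) (f : Fin n → ℝ) :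
    ∑ x : Fin k → Fin n, mlext P (fun i => f (x i))
      = (n:ℝ) ^ k * mlext P (fun _ => (∑ v, f v) / (n:ℝ)) := by
  have hnne : (n:ℝ) ≠ 0 := by positivity
  unfold mlext
  rw [Finset.sum_comm, Finset.mul_sum]
  refine Finset.sum_congr rfl fun a _ => ?_
  rw [← Finset.mul_sum]
  have key : ∑ x : Fin k → Fin n, ∏ i, ((1 + sgn (a i) * f (x i)) / 2)
      = ∏ i : Fin k, ((n:ℝ) * ((1 + sgn (a i) * ((∑ v, f v) / (n:ℝ))) / 2)) := by
    rw [← Fintype.piFinset_univ,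
      Finset.sum_prod_piFinset univ (fun (i : Fin k) (v : Fin n) => (1 + sgn (a i) * f v) / 2)]
    refine Finset.prod_congr rfl fun i _ => ?_
    rw [← Finset.sum_div, Finset.sum_add_distrib, ← Finset.mul_sum]
    simp only [Finset.sum_const, Finset.card_univ, Fintype.card_fin, nsmul_eq_mul, mul_one]
    field_simp
  rw [key, Finset.prod_mul_distrib, Finset.prod_const, Finset.card_univ, Fintype.card_fin]
  ring

set_option maxHeartbeats 1000000 in
lemma sum_emb_le {k n : ℕ} (hkn : k ≤ n) (hn : 0 < n) (P : (Fin k → Bool) → ℝ)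
    (hP : ∀ a, P a ∈ Set.Icc (0:ℝ) 1) (f : Fin n → ℝ) (hf : ∀ x, |f x| ≤ 1) :
    (∑ e : Fin k ↪ Fin n, mlext P (fun i => f (e i))) / (Fintype.card (Fin k ↪ Fin n) : ℝ)
      ≤ mlext P (fun _ => (∑ v, f v) / (n:ℝ)) + (k:ℝ) ^ 2 / (n:ℝ) := by
  classical
  have hA : Fintype.card (Fin k ↪ Fin n) = n.descFactorial k := by
    rw [Fintype.card_embedding_eq, Fintype.card_fin, Fintype.card_fin]
  have hApos : 0 < n.descFactorial k :=
    Nat.pos_of_ne_zero fun h => absurd (Nat.descFactorial_eq_zero_iff_lt.mp h) (not_lt.mpr hkn)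
  have hAposR : (0:ℝ) < (Fintype.card (Fin k ↪ Fin n) : ℝ) := by
    rw [hA]; exact_mod_cast hApos
  have hmem : ∀ e : Fin k ↪ Fin n, mlext P (fun i => f (e i)) ∈ Set.Icc (0:ℝ) 1 :=
    fun e => mlext_mem P hP _ (fun i => hf (e i))
  -- sum over embeddings ≤ sum over all functions
  have hinj : Function.Injective (fun (e : Fin k ↪ Fin n) => (e : Fin k → Fin n)) :=
    fun e₁ e₂ h => Function.Embedding.coe_injective h
  have himg : ∑ e : Fin k ↪ Fin n, mlext P (fun i => f (e i))
      = ∑ x ∈ (univ : Finset (Fin k ↪ Fin n)).image (fun e : Fin k ↪ Fin n => ⇑e),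
          mlext P (fun i => f (x i)) :=
    (Finset.sum_image (g := fun e : Fin k ↪ Fin n => ⇑e)
      (f := fun x : Fin k → Fin n => mlext P (fun i => f (x i)))
      (fun e _ e' _ h => hinj h)).symm
  have hsub : ∑ e : Fin k ↪ Fin n, mlext P (fun i => f (e i))
      ≤ ∑ x : Fin k → Fin n, mlext P (fun i => f (x i)) := by
    rw [himg]
    exact Finset.sum_le_sum_of_subset_of_nonneg (Finset.subset_univ _)
      (fun x _ _ => (mlext_mem P hP _ (fun i => hf (x i))).1)
  have hSA1 : ∑ e : Fin k ↪ Fin n, mlext P (fun i => f (e i))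
      ≤ (Fintype.card (Fin k ↪ Fin n) : ℝ) := by
    calc ∑ e : Fin k ↪ Fin n, mlext P (fun i => f (e i))
        ≤ ∑ _e : Fin k ↪ Fin n, (1:ℝ) := Finset.sum_le_sum fun e _ => (hmem e).2
      _ = _ := by simp
  have hSA0 : 0 ≤ ∑ e : Fin k ↪ Fin n, mlext P (fun i => f (e i)) :=
    Finset.sum_nonneg fun e _ => (hmem e).1
  set SA := ∑ e : Fin k ↪ Fin n, mlext P (fun i => f (e i)) with hSA
  set A := (Fintype.card (Fin k ↪ Fin n) : ℝ) with hAdef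
  have hnk : (0:ℝ) < (n:ℝ) ^ k := by positivity
  have hgap : ((n:ℝ)^k - A) / (n:ℝ)^k ≤ (k:ℝ)^2 / (n:ℝ) := by
    have hg := descfac_gap k n hkn
    rw [hAdef, hA]
    rw [div_le_div_iff₀ hnk (by exact_mod_cast hn)]
    nlinarith [hg]
  have hiid : (∑ x : Fin k → Fin n, mlext P (fun i => f (x i))) / (n:ℝ)^k
      = mlext P (fun _ => (∑ v, f v) / (n:ℝ)) := by
    rw [sum_fun_mlext hn P f]
    field_simp
  have hmain : SA / A ≤ (∑ x : Fin k → Fin n, mlext P (fun i => f (x i))) / (n:ℝ)^k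
      + ((n:ℝ)^k - A) / (n:ℝ)^k := by
    have hAle : A ≤ (n:ℝ)^k := by
      rw [hAdef, hA]
      exact_mod_cast Nat.descFactorial_le_pow n k
    have h1 : SA / A - SA / (n:ℝ)^k ≤ ((n:ℝ)^k - A) / (n:ℝ)^k := by
      have e : SA / A - SA / (n:ℝ)^k = SA * (((n:ℝ)^k - A) / (A * (n:ℝ)^k)) := by
        field_simp
      rw [e]
      calc SA * (((n:ℝ)^k - A) / (A * (n:ℝ)^k)) ≤ A * (((n:ℝ)^k - A) / (A * (n:ℝ)^k)) := by
            refine mul_le_mul_of_nonneg_right hSA1 ?_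
            exact div_nonneg (by linarith) (by positivity)
        _ = ((n:ℝ)^k - A) / (n:ℝ)^k := by field_simp
    have h2 : SA / (n:ℝ)^k ≤ (∑ x : Fin k → Fin n, mlext P (fun i => f (x i))) / (n:ℝ)^k :=
      (div_le_div_iff_of_pos_right hnk).mpr hsub
    linarith
  rw [← hiid]
  calc SA / A ≤ _ := hmain
    _ ≤ _ := by linarith [hgap]

lemma uprob_ge_of_bad {Ω : Type} [Fintype Ω] (p : Ω → Prop) {δ : ℝ}
    (hcard : 0 < (Fintype.card Ω : ℝ))
    (inst : DecidablePred fun ω => ¬ p ω)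
    (h : ((@Finset.filter Ω (fun ω => ¬ p ω) inst Finset.univ).card : ℝ)
        ≤ δ * (Fintype.card Ω : ℝ)) :
    1 - δ ≤ uprob p := by
  classical
  rw [uprob]
  rw [le_div_iff₀ hcard]
  letI dp := Classical.decPred p
  have key := Finset.card_filter_add_card_filter_not (s := (Finset.univ : Finset Ω))
    (p := p)
  have hcards : (@Finset.filter Ω (fun ω => ¬ p ω) inst Finset.univ).card
      = (Finset.univ.filter (fun ω => ¬ p ω)).card := by
    congr 1
  rw [hcards] at h
  have key2 : ((Finset.univ.filter p).card : ℝ)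
      + ((Finset.univ.filter (fun ω => ¬ p ω)).card : ℝ) = (Fintype.card Ω : ℝ) := by
    rw [← Finset.card_univ]
    exact_mod_cast key
  nlinarith [h, key2]

lemma uprob_one {Ω : Type} [Fintype Ω] (p : Ω → Prop)
    (hcard : 0 < (Fintype.card Ω : ℝ)) (h : ∀ ω, p ω) : uprob p = 1 := by
  rw [uprob]
  letI := Classical.decPred p
  rw [Finset.filter_true_of_mem (fun ω _ => h ω), Finset.card_univ, div_self (ne_of_gt hcard)]

lemma union_count {Ω : Type} [Fintype Ω] [DecidableEq Ω] {I : Type} [Fintype I]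
    (q : Ω → Prop) [DecidablePred q] (r : I → Ω → Prop) [∀ i, DecidablePred (r i)]
    (h : ∀ ω, q ω → ∃ i, r i ω) (c : ℝ)
    (hc : ∀ i, ((Finset.univ.filter (r i)).card : ℝ) ≤ c) (hc0 : 0 ≤ c) :
    ((Finset.univ.filter q).card : ℝ) ≤ (Fintype.card I : ℝ) * c := by
  have hsub : Finset.univ.filter q ⊆ Finset.univ.biUnion (fun i => Finset.univ.filter (r i)) := by
    intro ω hω
    rw [Finset.mem_filter] at hω
    obtain ⟨i, hi⟩ := h ω hω.2
    exact Finset.mem_biUnion.mpr ⟨i, Finset.mem_univ _,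
      Finset.mem_filter.mpr ⟨Finset.mem_univ _, hi⟩⟩
  calc ((Finset.univ.filter q).card : ℝ)
      ≤ ((Finset.univ.biUnion fun i => Finset.univ.filter (r i)).card : ℝ) := by
        exact_mod_cast Finset.card_le_card hsub
    _ ≤ ∑ i : I, ((Finset.univ.filter (r i)).card : ℝ) := by
        exact_mod_cast Finset.card_biUnion_le
    _ ≤ ∑ _i : I, c := Finset.sum_le_sum fun i _ => hc i
    _ = (Fintype.card I : ℝ) * c := by
        rw [Finset.sum_const, Finset.card_univ, nsmul_eq_mul]

set_option maxHeartbeats 3000000 in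
lemma perassign {k n m : ℕ} (hkn : k ≤ n) (hn0 : 0 < n) (hm0 : 0 < m)
    (P : (Fin k → Bool) → ℝ) (hP : ∀ a, P a ∈ Set.Icc (0:ℝ) 1)
    (f : Fin n → ℝ) (hfabs : ∀ x, |f x| ≤ 1)
    (ζ B t : ℝ) (ht0 : 0 ≤ t)
    (hgood : |(∑ x, f x)/(n:ℝ)| ≤ ζ →
      mlext P (fun _ => (∑ x, f x)/(n:ℝ)) + (k:ℝ)^2/(n:ℝ) + t ≤ B)
    (pb : (Fin m → (Fin k ↪ Fin n)) → Prop) [DecidablePred pb]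
    (hpb : ∀ ω, pb ω → |(∑ x, f x)/(n:ℝ)| ≤ ζ ∧
      ¬ ((∑ j : Fin m, mlext P (fun i => f (ω j i)))/((m:ℕ):ℝ) ≤ B)) :
    ((Finset.univ.filter pb).card : ℝ)
      ≤ (Fintype.card (Fin k ↪ Fin n) : ℝ)^m * Real.exp (-(m:ℝ)*t^2/4) := by
  have hEpos : 0 < Fintype.card (Fin k ↪ Fin n) := by
    rw [Fintype.card_embedding_eq, Fintype.card_fin, Fintype.card_fin]
    exact Nat.pos_of_ne_zero fun h => absurd (Nat.descFactorial_eq_zero_iff_lt.mp h)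
      (not_lt.mpr hkn)
  have hmR : (0:ℝ) < (m:ℝ) := by exact_mod_cast hm0
  by_cases hav : |(∑ x, f x)/(n:ℝ)| ≤ ζ
  · set G : (Fin k ↪ Fin n) → ℝ := fun e => mlext P (fun i => f (e i)) with hG
    have hG0 : ∀ e : Fin k ↪ Fin n, 0 ≤ mlext P (fun i => f (e i)) :=
      fun e => (mlext_mem P hP _ (fun i => hfabs _)).1
    have hG1 : ∀ e : Fin k ↪ Fin n, mlext P (fun i => f (e i)) ≤ 1 :=
      fun e => (mlext_mem P hP _ (fun i => hfabs _)).2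
    refine chernoff m G (fun e => hG0 e) (fun e => hG1 e) t ht0 hEpos pb ?_
    intro ω hb
    simp only [hG]
    obtain ⟨hav2, hobj⟩ := hpb ω hb
    push_neg at hobj
    have hemb := sum_emb_le hkn hn0 P hP f hfabs
    have hg := hgood hav
    have hchain : (∑ e : Fin k ↪ Fin n, mlext P (fun i => f (e i)))
        / (Fintype.card (Fin k ↪ Fin n) : ℝ) + t ≤ B := by linarith
    have h8 : (m:ℝ) * B < ∑ j : Fin m, mlext P (fun i => f (ω j i)) := by
      calc (m:ℝ) * B
          < (m:ℝ) * ((∑ j : Fin m, mlext P (fun i => f (ω j i)))/((m:ℕ):ℝ)) :=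
            mul_lt_mul_of_pos_left hobj hmR
        _ = ∑ j : Fin m, mlext P (fun i => f (ω j i)) := by field_simp
    calc (m:ℝ) * ((∑ e : Fin k ↪ Fin n, mlext P (fun i => f (e i)))
          / (Fintype.card (Fin k ↪ Fin n) : ℝ) + t)
        ≤ (m:ℝ) * B := mul_le_mul_of_nonneg_left hchain hmR.le
      _ ≤ ∑ j : Fin m, mlext P (fun i => f (ω j i)) := h8.le
  · have hempty : Finset.univ.filter pb = ∅ :=
      Finset.filter_eq_empty_iff.mpr fun ω _ hb => hav (hpb ω hb).1
    rw [hempty]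
    simp only [Finset.card_empty, Nat.cast_zero]
    positivity

set_option maxHeartbeats 2000000 in
theorem stmt14 :
    ∃ C1 C2 : ℝ, 0 < C1 ∧ 0 < C2 ∧
      ∀ (k : ℕ), 0 < k →
        ∀ (P : (Fin k → Bool) → ℝ), (∀ a, P a ∈ Set.Icc (0 : ℝ) 1) →
          ∀ (D : Finset ℝ), (∀ d ∈ D, d ∈ Set.Icc (-1 : ℝ) 1) →
            ∀ (Δ : ℕ), 0 < Δ →
              ∀ ζ : ℝ, 0 ≤ ζ → (k : ℝ) * ζ ^ 2 < 1 / 2 →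
                ∀ δ : ℝ, 0 < δ →
                  ∃ N : ℕ, ∀ n : ℕ, N ≤ n →
                    1 - δ ≤
                      uprob (fun ω : Fin (Δ * n) → (Fin k ↪ Fin n) =>
                        ∀ f : Fin n → ℝ, (∀ x, f x ∈ D) →
                          |(∑ x, f x) / (n : ℝ)| ≤ ζ →
                          (∑ j : Fin (Δ * n), mlext P (fun i => f (ω j i)))
                              / ((Δ * n : ℕ) : ℝ)
                            ≤ mlext P (fun _ => 0)
                              + C1 * (Real.sqrt (Real.log (D.card) / (Δ : ℝ))
                                  + (k : ℝ) ^ 2 / (n : ℝ))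
                              + C2 * (Real.sqrt (k : ℝ) * ζ)) := by
  classical
  refine ⟨3, 2, by norm_num, by norm_num, ?_⟩
  intro k hk P hP D hD Δ hΔ ζ hζ0 hζ δ hδ
  obtain ⟨N0, hN0⟩ := exists_nat_ge ((-Real.log δ) / ((5/4) * Real.log 2))
  refine ⟨max (max k 1) N0, fun n hn => ?_⟩
  have hkn : k ≤ n := le_trans (le_trans (le_max_left _ _) (le_max_left _ _)) hn
  have hn0 : 0 < n := lt_of_lt_of_le (lt_of_lt_of_le one_pos
    (le_trans (le_max_right _ _) (le_max_left _ _))) hn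
  have hN0n : (N0 : ℝ) ≤ (n : ℝ) := by
    exact_mod_cast le_trans (le_max_right _ _) hn
  have hnR : (0:ℝ) < (n:ℝ) := by exact_mod_cast hn0
  have hΔR : (0:ℝ) < (Δ:ℝ) := by exact_mod_cast hΔ
  set m : ℕ := Δ * n with hmdef
  have hm0 : 0 < m := Nat.mul_pos hΔ hn0
  have hmR : (0:ℝ) < (m:ℝ) := by exact_mod_cast hm0
  have hk1 : (1:ℝ) ≤ (k:ℝ) := by exact_mod_cast hk
  have hcardE : Fintype.card (Fin k ↪ Fin n) = n.descFactorial k := by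
    rw [Fintype.card_embedding_eq, Fintype.card_fin, Fintype.card_fin]
  have hEpos : 0 < Fintype.card (Fin k ↪ Fin n) := by
    rw [hcardE]
    exact Nat.pos_of_ne_zero fun h => absurd (Nat.descFactorial_eq_zero_iff_lt.mp h)
      (not_lt.mpr hkn)
  have hΩcard : Fintype.card (Fin m → (Fin k ↪ Fin n))
      = (Fintype.card (Fin k ↪ Fin n)) ^ m := by
    rw [Fintype.card_fun, Fintype.card_fin]
  have hΩpos : (0:ℝ) < (Fintype.card (Fin m → (Fin k ↪ Fin n)) : ℝ) := by
    rw [hΩcard]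
    exact_mod_cast pow_pos hEpos m
  have hsqrt2 : Real.sqrt 2 ≤ 2 := by
    nlinarith [Real.sq_sqrt (show (0:ℝ) ≤ 2 by norm_num), Real.sqrt_nonneg 2]
  have hsqk : 0 ≤ Real.sqrt k := Real.sqrt_nonneg _
  have hkn2 : (0:ℝ) ≤ (k:ℝ)^2/(n:ℝ) := by positivity
  have hsqlog : 0 ≤ Real.sqrt (Real.log D.card / (Δ:ℝ)) := Real.sqrt_nonneg _
  -- uniform bound for the constant-μ multilinear value
  have hconst : ∀ μ : ℝ, |μ| ≤ ζ →
      mlext P (fun _ => μ) ≤ mlext P (fun _ => 0) + 2 * (Real.sqrt k * ζ) := by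
    intro μ hμ
    have habs : μ^2 ≤ ζ^2 := by nlinarith [sq_abs μ, abs_nonneg μ]
    have h2 : (k:ℝ) * μ^2 ≤ 1/2 := le_trans (by nlinarith) hζ.le
    have h3 := mlext_const_le hk P hP μ h2
    have h4 : Real.sqrt 2 * Real.sqrt k * |μ| ≤ 2 * (Real.sqrt k * ζ) := by
      have s1 : Real.sqrt 2 * Real.sqrt k * |μ| ≤ 2 * Real.sqrt k * |μ| :=
        mul_le_mul_of_nonneg_right (mul_le_mul_of_nonneg_right hsqrt2 hsqk) (abs_nonneg μ)
      have s2 : 2 * Real.sqrt k * |μ| ≤ 2 * Real.sqrt k * ζ :=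
        mul_le_mul_of_nonneg_left hμ (by positivity)
      calc Real.sqrt 2 * Real.sqrt k * |μ| ≤ 2 * Real.sqrt k * |μ| := s1
        _ ≤ 2 * (Real.sqrt k * ζ) := by linarith [s2]
    linarith
  by_cases hDcard : D.card ≤ 1
  · -- degenerate case : at most one assignment, deterministic objective
    have hall : ∀ ω : Fin m → (Fin k ↪ Fin n),
        ∀ f : Fin n → ℝ, (∀ x, f x ∈ D) →
          |(∑ x, f x) / (n : ℝ)| ≤ ζ →
          (∑ j : Fin m, mlext P (fun i => f (ω j i))) / ((m : ℕ) : ℝ)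
            ≤ mlext P (fun _ => 0)
              + 3 * (Real.sqrt (Real.log (D.card) / (Δ : ℝ)) + (k : ℝ) ^ 2 / (n : ℝ))
              + 2 * (Real.sqrt (k : ℝ) * ζ) := by
      intro ω f hfD havg
      have hfd0 : f ⟨0, hn0⟩ ∈ D := hfD _
      have hD1 : D.card = 1 := le_antisymm hDcard (Finset.card_pos.mpr ⟨f _, hfd0⟩)
      obtain ⟨d, hd⟩ := Finset.card_eq_one.mp hD1
      have hfx : ∀ x, f x = d := fun x => Finset.mem_singleton.mp (hd ▸ hfD x)
      have hsum : (∑ x, f x) = (n:ℝ) * d := by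
        rw [Finset.sum_congr rfl fun x _ => hfx x, Finset.sum_const, Finset.card_univ,
          Fintype.card_fin, nsmul_eq_mul]
      have havg2 : (∑ x, f x)/(n:ℝ) = d := by rw [hsum]; field_simp
      rw [havg2] at havg
      have hterm : ∀ j : Fin m, mlext P (fun i => f (ω j i)) = mlext P (fun _ => d) := by
        intro j; congr 1; funext i; exact hfx _
      have hobj : (∑ j : Fin m, mlext P (fun i => f (ω j i)))/((m:ℕ):ℝ)
          = mlext P (fun _ => d) := by
        rw [Finset.sum_congr rfl fun j _ => hterm j, Finset.sum_const, Finset.card_univ,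
          Fintype.card_fin, nsmul_eq_mul]
        field_simp
      rw [hobj]
      have h5 := hconst d havg
      have h6 : 0 ≤ 3 * (Real.sqrt (Real.log (D.card) / (Δ:ℝ)) + (k:ℝ)^2/(n:ℝ)) := by
        positivity
      linarith
    rw [uprob_one _ hΩpos hall]
    linarith
  · -- main case : at least two values
    push_neg at hDcard
    have hD2 : (2:ℝ) ≤ (D.card:ℝ) := by exact_mod_cast hDcard
    have hDpos : (0:ℝ) < (D.card:ℝ) := by linarith
    set L : ℝ := Real.log D.card with hL
    have hlog2 : (0:ℝ) < Real.log 2 := Real.log_pos (by norm_num)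
    have hL2 : Real.log 2 ≤ L := Real.log_le_log (by norm_num) hD2
    have hL0 : (0:ℝ) ≤ L := le_trans hlog2.le hL2
    have hLΔ : (0:ℝ) ≤ L / (Δ:ℝ) := by positivity
    set t : ℝ := 3 * Real.sqrt (L/(Δ:ℝ)) with ht
    have ht0 : 0 ≤ t := by positivity
    set B : ℝ := mlext P (fun _ => 0)
        + 3 * (Real.sqrt (L / (Δ : ℝ)) + (k : ℝ) ^ 2 / (n : ℝ))
        + 2 * (Real.sqrt (k : ℝ) * ζ) with hB
    refine uprob_ge_of_bad _ hΩpos (fun ω => @instDecidableNot _ (Classical.propDecidable _)) ?_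
    set c : ℝ := (Fintype.card (Fin k ↪ Fin n) : ℝ)^m * Real.exp (-(m:ℝ)*t^2/4) with hc
    have hc0 : 0 ≤ c := by rw [hc]; positivity
    have hgoodB : ∀ f : Fin n → ℝ, |(∑ x, f x)/(n:ℝ)| ≤ ζ →
        mlext P (fun _ => (∑ x, f x)/(n:ℝ)) + (k:ℝ)^2/(n:ℝ) + t ≤ B := by
      intro f havg
      have hcst := hconst ((∑ x, f x)/(n:ℝ)) havg
      rw [hB, ht]
      linarith [hkn2]
    have hmain : ((Finset.univ.filter (fun ω : Fin m → (Fin k ↪ Fin n) =>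
        ¬ (∀ f : Fin n → ℝ, (∀ x, f x ∈ D) →
          |(∑ x, f x) / (n : ℝ)| ≤ ζ →
          (∑ j : Fin m, mlext P (fun i => f (ω j i))) / ((m:ℕ):ℝ) ≤ B))).card : ℝ)
        ≤ (Fintype.card (Fin n → {x // x ∈ D}) : ℝ) * c := by
      refine union_count _ (fun (σ : Fin n → {x // x ∈ D}) (ω : Fin m → (Fin k ↪ Fin n)) =>
          |(∑ x, ((σ x : ℝ))) / (n : ℝ)| ≤ ζ ∧
          ¬ ((∑ j : Fin m, mlext P (fun i => ((σ (ω j i) : ℝ)))) / ((m:ℕ):ℝ) ≤ B))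
        ?_ c ?_ hc0
      · intro ω hω
        push_neg at hω
        obtain ⟨f, hfD, havg, hobj⟩ := hω
        exact ⟨fun x => ⟨f x, hfD x⟩, havg, not_le.mpr hobj⟩
      · intro σ
        have hfabs : ∀ x : Fin n, |((σ x : ℝ))| ≤ 1 := by
          intro x
          have h := hD _ (σ x).2
          rw [abs_le]; exact ⟨h.1, h.2⟩
        refine perassign hkn hn0 hm0 P hP (fun x => ((σ x : ℝ))) hfabs ζ B t ht0
          (hgoodB _) _ (fun ω hb => hb)
    refine le_trans hmain ?_
    have hcardI : (Fintype.card (Fin n → {x // x ∈ D}) : ℝ) = (D.card : ℝ)^n := by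
      rw [Fintype.card_fun, Fintype.card_coe, Fintype.card_fin]
      push_cast
      ring
    rw [hcardI, hc]
    -- numerics
    have ht2 : t^2 = 9 * (L/(Δ:ℝ)) := by
      rw [ht, mul_pow, Real.sq_sqrt hLΔ]
      norm_num
    have hmL : -(m:ℝ) * t^2/4 = -(9/4) * (n:ℝ) * L := by
      rw [ht2, hmdef]
      push_cast
      field_simp
    have hDn : (D.card : ℝ)^n = Real.exp ((n:ℝ) * L) := by
      rw [hL, ← Real.exp_log hDpos, ← Real.exp_nat_mul, Real.exp_log hDpos]
    have hfin : Real.exp (-(5/4) * (n:ℝ) * L) ≤ δ := by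
      have hstep : -Real.log δ ≤ (5/4) * Real.log 2 * (n:ℝ) := by
        have h9 := (div_le_iff₀ (by positivity : (0:ℝ) < (5/4) * Real.log 2)).mp hN0
        nlinarith
      have h10 : -(5/4) * (n:ℝ) * L ≤ Real.log δ := by
        have h11 : (5/4) * Real.log 2 * (n:ℝ) ≤ (5/4) * (n:ℝ) * L := by
          nlinarith
        linarith
      calc Real.exp (-(5/4) * (n:ℝ) * L) ≤ Real.exp (Real.log δ) := Real.exp_le_exp.mpr h10
        _ = δ := Real.exp_log hδ
    calc (D.card : ℝ)^n * ((Fintype.card (Fin k ↪ Fin n) : ℝ)^m * Real.exp (-(m:ℝ) * t^2/4))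
        = (Fintype.card (Fin k ↪ Fin n) : ℝ)^m
            * ((D.card : ℝ)^n * Real.exp (-(m:ℝ) * t^2/4)) := by ring
      _ = (Fintype.card (Fin k ↪ Fin n) : ℝ)^m * Real.exp (-(5/4) * (n:ℝ) * L) := by
          rw [hDn, hmL, ← Real.exp_add]
          congr 1
          ring
      _ ≤ (Fintype.card (Fin k ↪ Fin n) : ℝ)^m * δ :=
          mul_le_mul_of_nonneg_left hfin (by positivity)
      _ = δ * (Fintype.card (Fin m → (Fin k ↪ Fin n)) : ℝ) := by
          rw [hΩcard]
          push_cast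
          ring
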